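/- The polynomial Δ(t) = (t⁸ − t⁷ + t⁵ − t⁴ + t³ − t + 1)(2t² − 5t + 2) over ℤ does not admit a factorization of the form ± t^k · f(t) · f(t⁻¹) in ℤ[t, t⁻¹] for any Laurent polynomial f(t) ∈ ℤ[t, t⁻¹] and integer k (the Fox–Milnor condition fails). -/

import Mathlib

open Polynomial

lemma rev_eval (P : Polynomial ℂ) {z : ℂ} (hz : z ≠ 0) :
    P.reverse.eval z = z ^ P.natDegree * P.eval z⁻¹ := by
  letI : Invertible z⁻¹ := ⟨z, by simp [mul_inv_cancel₀ hz], by simp [inv_mul_cancel₀ hz]⟩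
  have h : P.reverse.eval z * (z⁻¹) ^ P.natDegree = P.eval z⁻¹ :=
    Polynomial.eval₂_reverse_mul_pow (RingHom.id ℂ) z⁻¹ P
  field_simp at h
  rw [one_div] at h
  rw [← h, mul_left_comm, ← mul_pow, mul_inv_cancel₀ hz, one_pow, mul_one]

lemma conj_eval (p : Polynomial ℤ) (z : ℂ) :
    (starRingEnd ℂ) ((p.map (Int.castRingHom ℂ)).eval z)
      = (p.map (Int.castRingHom ℂ)).eval ((starRingEnd ℂ) z) := by
  rw [eval_map, eval_map, Polynomial.hom_eval₂]
  congr 1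
  exact RingHom.ext_int _ _

lemma core (p : Polynomial ℤ) (a b : ℕ) (s : ℂ) (hs : s ≠ 0)
    (hC : ((X^8 - X^7 + X^5 - X^4 + X^3 - X + 1) * (2*X^2 - 5*X + 2) : Polynomial ℂ) * X^a
        = C s * ((p.map (Int.castRingHom ℂ)) * (p.map (Int.castRingHom ℂ)).reverse * X^b)) :
    False := by
  have h15' : (15 : ℕ) ≠ 0 := by norm_num
  set ζ : ℂ := Complex.exp (2 * Real.pi * Complex.I / 15) with hζdef
  have hζ : IsPrimitiveRoot ζ 15 := Complex.isPrimitiveRoot_exp 15 h15'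
  have h15 : ζ ^ 15 = 1 := hζ.pow_eq_one
  have hζ0 : ζ ≠ 0 := fun h0 => by rw [h0] at h15; norm_num at h15
  have h3 : ζ ^ 3 ≠ 1 := hζ.pow_ne_one_of_pos_of_lt (by norm_num) (by norm_num)
  have h5 : ζ ^ 5 ≠ 1 := hζ.pow_ne_one_of_pos_of_lt (by norm_num) (by norm_num)
  have hconj : (starRingEnd ℂ) ζ = ζ⁻¹ :=
    (Complex.inv_eq_conj (Complex.norm_eq_one_of_pow_eq_one h15 h15')).symm
  have hc : ζ^7 + ζ^6 + ζ^5 - ζ^2 - ζ - 1 ≠ 0 := by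
    intro h0
    have h1 : (ζ^3 - 1) * (ζ^5 - 1) = (ζ^7 + ζ^6 + ζ^5 - ζ^2 - ζ - 1) * (ζ - 1) := by ring
    rw [h0, zero_mul] at h1
    rcases mul_eq_zero.mp h1 with h' | h'
    · exact h3 (by linear_combination h')
    · exact h5 (by linear_combination h')
  have hq : 2*ζ^2 - 5*ζ + 2 ≠ 0 := by
    intro h0
    have h1 : (2*ζ - 1) * (ζ - 2) = 0 := by linear_combination h0
    rcases mul_eq_zero.mp h1 with h' | h'
    · have hz : ζ = 1/2 := by linear_combination h'/2
      rw [hz] at h15; norm_num at h15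
    · have hz : ζ = 2 := by linear_combination h'
      rw [hz] at h15; norm_num at h15
  have hΦ : ζ^8 - ζ^7 + ζ^5 - ζ^4 + ζ^3 - ζ + 1 = 0 := by
    have hmul : (ζ^8 - ζ^7 + ζ^5 - ζ^4 + ζ^3 - ζ + 1) * (ζ^7 + ζ^6 + ζ^5 - ζ^2 - ζ - 1) = 0 := by
      linear_combination h15
    exact (mul_eq_zero.mp hmul).resolve_right hc
  have hΦ' : 8*ζ^7 - 7*ζ^6 + 5*ζ^4 - 4*ζ^3 + 3*ζ^2 - 1 ≠ 0 := by
    intro h0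
    have hder : (8*ζ^7 - 7*ζ^6 + 5*ζ^4 - 4*ζ^3 + 3*ζ^2 - 1) * (ζ^7 + ζ^6 + ζ^5 - ζ^2 - ζ - 1)
        + (ζ^8 - ζ^7 + ζ^5 - ζ^4 + ζ^3 - ζ + 1) * (7*ζ^6 + 6*ζ^5 + 5*ζ^4 - 2*ζ - 1)
        = 15 * ζ^14 := by ring
    rw [h0, hΦ, zero_mul, zero_mul, add_zero] at hder
    exact (mul_ne_zero (by norm_num : (15:ℂ) ≠ 0) (pow_ne_zero 14 hζ0)) hder.symm
  set P : Polynomial ℂ := p.map (Int.castRingHom ℂ) with hPdef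
  set u : ℂ := P.eval ζ with hudef
  have hv : P.reverse.eval ζ = ζ ^ P.natDegree * (starRingEnd ℂ) u := by
    rw [rev_eval P hζ0, ← hconj, hudef, hPdef, conj_eval]
  -- evaluate at ζ
  have e1 := congrArg (Polynomial.eval ζ) hC
  simp only [eval_mul, eval_pow, eval_add, eval_sub, eval_X, eval_one, eval_C,
    eval_ofNat] at e1
  rw [hΦ, zero_mul, zero_mul] at e1
  have h2' : u * P.reverse.eval ζ = 0 := by
    rcases mul_eq_zero.mp e1.symm with h' | h'
    · exact absurd h' hs
    · rcases mul_eq_zero.mp h' with h'' | h''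
      · exact h''
      · exact absurd h'' (pow_ne_zero _ hζ0)
  have h4 : ζ ^ P.natDegree * (u * (starRingEnd ℂ) u) = 0 := by
    rw [hv] at h2'; linear_combination h2'
  have h5' : u * (starRingEnd ℂ) u = 0 :=
    (mul_eq_zero.mp h4).resolve_left (pow_ne_zero _ hζ0)
  have hPz : u = 0 := by
    rw [Complex.mul_conj] at h5'
    exact_mod_cast Complex.normSq_eq_zero.mp (by exact_mod_cast h5')
  have hrevz : P.reverse.eval ζ = 0 := by rw [hv, hPz, map_zero, mul_zero]
  -- derivative step
  have e2 := congrArg (fun q => Polynomial.eval ζ (Polynomial.derivative q)) hC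
  simp only [derivative_mul, derivative_pow, derivative_X, derivative_one, derivative_sub,
    derivative_add, derivative_C, derivative_ofNat, eval_add, eval_mul, eval_pow, eval_sub,
    eval_X, eval_one, eval_C, eval_ofNat, eval_natCast, mul_one, ← hudef] at e2
  rw [hPz, hrevz] at e2
  simp only [eval_zero, zero_mul, mul_zero, add_zero, zero_add] at e2
  norm_num at e2
  have hfin : (8*ζ^7 - 7*ζ^6 + 5*ζ^4 - 4*ζ^3 + 3*ζ^2 - 1) * (2*ζ^2 - 5*ζ + 2) * ζ^a = 0 := by
    linear_combination e2 - ((4*ζ - 5) * ζ^a + (2*ζ^2 - 5*ζ + 2) * ((a:ℂ) * ζ^(a-1))) * hΦ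
  rcases mul_eq_zero.mp hfin with h' | h'
  · exact (mul_ne_zero hΦ' hq) h'
  · exact (pow_ne_zero _ hζ0) h'

lemma keyInt (p : Polynomial ℤ) (a b : ℕ)
    (h : ((X^8 - X^7 + X^5 - X^4 + X^3 - X + 1) * (2*X^2 - 5*X + 2) : Polynomial ℤ) * X^a
        = p * p.reverse * X^b ∨
      ((X^8 - X^7 + X^5 - X^4 + X^3 - X + 1) * (2*X^2 - 5*X + 2) : Polynomial ℤ) * X^a
        = -(p * p.reverse * X^b)) : False := by
  have hrevmap : p.reverse.map (Int.castRingHom ℂ) = (p.map (Int.castRingHom ℂ)).reverse := by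
    unfold Polynomial.reverse
    rw [reflect_map,
      natDegree_map_eq_of_injective (by intro x y hxy; simpa using hxy)]
  rcases h with h | h
  · refine core p a b 1 one_ne_zero ?_
    have := congrArg (Polynomial.map (Int.castRingHom ℂ)) h
    simp only [Polynomial.map_mul, Polynomial.map_pow, Polynomial.map_add, Polynomial.map_sub,
      Polynomial.map_one, Polynomial.map_X, Polynomial.map_ofNat, hrevmap, map_C] at this ⊢
    simpa using this
  · refine core p a b (-1) (by norm_num) ?_
    have := congrArg (Polynomial.map (Int.castRingHom ℂ)) h
    simp only [Polynomial.map_mul, Polynomial.map_pow, Polynomial.map_add, Polynomial.map_sub,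
      Polynomial.map_one, Polynomial.map_X, Polynomial.map_ofNat, Polynomial.map_neg,
      hrevmap, map_C] at this ⊢
    rw [this]
    simp only [map_neg, map_one]
    ring

open LaurentPolynomial

/-- The polynomial `Δ(t) = (t⁸ − t⁷ + t⁵ − t⁴ + t³ − t + 1)(2t² − 5t + 2)` does
not satisfy the Fox–Milnor condition: it is not of the form `± tᵏ f(t) f(t⁻¹)`
for any Laurent polynomial `f ∈ ℤ[t,t⁻¹]` and any `k ∈ ℤ`. -/
theorem stmt_19 :
    ¬ ∃ (f : LaurentPolynomial ℤ) (k : ℤ),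
      (T 8 - T 7 + T 5 - T 4 + T 3 - T 1 + 1) * (2 * T 2 - 5 * T 1 + 2) =
          T k * f * invert f ∨
      (T 8 - T 7 + T 5 - T 4 + T 3 - T 1 + 1) * (2 * T 2 - 5 * T 1 + 2) =
          -(T k * f * invert f) := by
  rintro ⟨f, k, h⟩
  obtain ⟨n, p, hp⟩ := f.exists_T_pow
  set d : ℕ := p.natDegree with hd
  set a : ℕ := (-(k - (d:ℤ))).toNat with ha
  set b : ℕ := (k - (d:ℤ)).toNat with hb
  have h1 : Polynomial.toLaurent p.reverse = invert f * T ((d:ℤ) - n) := by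
    rw [LaurentPolynomial.toLaurent_reverse, hp, map_mul, invert_T, mul_T_assoc]
    rw [show -(n:ℤ) + (d:ℤ) = (d:ℤ) - n from by ring]
  have hTnd : (T ((n:ℤ)) : LaurentPolynomial ℤ) * T ((d:ℤ) - n) = T ((d:ℤ)) := by
    rw [← T_add]; congr 1; ring
  have hTka : (T k : LaurentPolynomial ℤ) * T ((a:ℕ) : ℤ) = T ((d:ℤ)) * T (((b:ℕ)) : ℤ) := by
    rw [← T_add, ← T_add]; congr 1; omega
  have hcommon : T k * f * invert f * T ((a:ℕ) : ℤ)
      = Polynomial.toLaurent (p * p.reverse * Polynomial.X ^ b) := by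
    calc T k * f * invert f * T ((a:ℕ) : ℤ)
        = f * invert f * (T k * T ((a:ℕ) : ℤ)) := by ring
      _ = f * invert f * (T ((d:ℤ)) * T (((b:ℕ)) : ℤ)) := by rw [hTka]
      _ = (f * T ((n:ℤ))) * (invert f * T ((d:ℤ) - n)) * T (((b:ℕ)) : ℤ) := by
          rw [← hTnd]; ring
      _ = Polynomial.toLaurent p * Polynomial.toLaurent p.reverse * T (((b:ℕ)) : ℤ) := by
          rw [hp, h1]
      _ = Polynomial.toLaurent (p * p.reverse * Polynomial.X ^ b) := by
          rw [map_mul, map_mul, Polynomial.toLaurent_X_pow]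
  have hΔ : Polynomial.toLaurent
      ((Polynomial.X^8 - Polynomial.X^7 + Polynomial.X^5 - Polynomial.X^4 + Polynomial.X^3
        - Polynomial.X + 1) * (2*Polynomial.X^2 - 5*Polynomial.X + 2) : Polynomial ℤ)
      = (T 8 - T 7 + T 5 - T 4 + T 3 - T 1 + 1) * (2 * T 2 - 5 * T 1 + 2) := by
    simp only [map_mul, map_add, map_sub, map_one, map_ofNat, Polynomial.toLaurent_X_pow,
      Polynomial.toLaurent_X]
    norm_num
  refine keyInt p a b ?_
  rcases h with h | h
  · left
    apply Polynomial.toLaurent_inj _ _ |>.mp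
    rw [map_mul, Polynomial.toLaurent_X_pow, hΔ, h, hcommon]
  · right
    apply Polynomial.toLaurent_inj _ _ |>.mp
    rw [map_mul, Polynomial.toLaurent_X_pow, hΔ, h, map_neg, neg_mul, hcommon]
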